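/- Let X₁,…,X_m be i.i.d. real random variables with continuous common c.d.f. F, and let X_{(1)} ≤ … ≤ X_{(m)} be the order statistics. Then for any 1 ≤ k ≤ m, any t₀ ∈ ℝ with P(X_{(k)} ≤ t₀) > 0, and any nondecreasing measurable set D' ⊆ ℝ^m: P((X_{(1)},…,X_{(m)}) ∈ D' | X_{(k-1)} ≤ t₀) ≥ P((X_{(1)},…,X_{(m)}) ∈ D' | X_{(k)} ≤ t₀), where X_{(0)} := −∞ (so conditioning on X_{(0)} ≤ t₀ is trivial). -/

import Mathlib

open MeasureTheory Set ProbabilityTheory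

namespace OSPRD


variable {m : ℕ}

/-- number of coordinates ≤ t -/
noncomputable def scnt (t : ℝ) (x : Fin m → ℝ) : ℕ := Fintype.card {i // x i ≤ t}

lemma sorted_le_iff {g f : Fin m → ℝ} (σ : Equiv.Perm (Fin m))
    (hfg : ∀ i, g i = f (σ i)) (hg : Monotone g) (t : ℝ) (j : Fin m) :
    g j ≤ t ↔ (j : ℕ) < scnt t f := by
  have h := Tuple.lt_card_le_iff_apply_le_of_monotone (j := j) (a := t) hg
  rw [← Fintype.card_subtype] at h
  have hcard : Fintype.card {i // g i ≤ t} = scnt t f := by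
    apply Fintype.card_congr
    exact Equiv.subtypeEquiv σ (fun i => by rw [hfg])
  rw [← h, hcard]

noncomputable def sortf (x : Fin m → ℝ) : Fin m → ℝ := x ∘ Tuple.sort x

lemma monotone_sortf (x : Fin m → ℝ) : Monotone (sortf x) := Tuple.monotone_sort x

lemma sortf_le_iff (x : Fin m → ℝ) (t : ℝ) (j : Fin m) :
    sortf x j ≤ t ↔ (j : ℕ) < scnt t x :=
  sorted_le_iff (Tuple.sort x) (fun _ => rfl) (monotone_sortf x) t j

lemma sortf_comp_perm (x : Fin m → ℝ) (σ : Equiv.Perm (Fin m)) :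
    sortf (x ∘ σ) = sortf x :=
  Tuple.comp_perm_comp_sort_eq_comp_sort

lemma scnt_eq_card (t : ℝ) (x : Fin m → ℝ) :
    scnt t x = (Finset.univ.filter (fun i => x i ≤ t)).card := by
  classical
  simp [scnt, Fintype.card_subtype]

lemma scnt_le_iff (t : ℝ) (x : Fin m → ℝ) (j : ℕ) :
    j ≤ scnt t x ↔ ∃ S : Finset (Fin m), S.card = j ∧ ∀ i ∈ S, x i ≤ t := by
  classical
  rw [scnt_eq_card]
  constructor
  · intro h
    obtain ⟨S, hS, hcard⟩ := Finset.exists_subset_card_eq h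
    exact ⟨S, hcard, fun i hi => (Finset.mem_filter.1 (hS hi)).2⟩
  · rintro ⟨S, rfl, hS⟩
    apply Finset.card_le_card
    intro i hi
    exact Finset.mem_filter.2 ⟨Finset.mem_univ i, hS i hi⟩

lemma measurable_scnt_set (t : ℝ) (j : ℕ) :
    MeasurableSet {x : Fin m → ℝ | j ≤ scnt t x} := by
  classical
  have : {x : Fin m → ℝ | j ≤ scnt t x}
      = ⋃ S ∈ {S : Finset (Fin m) | S.card = j}, ⋂ i ∈ (S : Finset (Fin m)), {x | x i ≤ t} := by
    ext x
    simp only [mem_setOf_eq, mem_iUnion, mem_iInter, scnt_le_iff]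
    constructor
    · rintro ⟨S, h1, h2⟩; exact ⟨S, h1, h2⟩
    · rintro ⟨S, h1, h2⟩; exact ⟨S, h1, h2⟩
  rw [this]
  refine MeasurableSet.biUnion (Set.to_countable _) (fun S _ => ?_)
  refine MeasurableSet.biInter (S : Finset (Fin m)).countable_toSet (fun i _ => ?_)
  exact measurableSet_le (measurable_pi_apply i) measurable_const

lemma measurable_sortf : Measurable (sortf (m := m)) := by
  rw [measurable_pi_iff]
  intro j
  apply measurable_of_Iic
  intro t
  have : (fun x => sortf x j) ⁻¹' Iic t = {x : Fin m → ℝ | (j : ℕ) + 1 ≤ scnt t x} := by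
    ext x
    simp only [mem_preimage, mem_Iic, mem_setOf_eq, sortf_le_iff, Nat.lt_iff_add_one_le]
  rw [this]
  exact measurable_scnt_set t _

lemma sortf_mono : Monotone (sortf (m := m)) := by
  intro x y hxy j
  rw [sortf_le_iff]
  have h1 : (j : ℕ) < scnt (sortf y j) y := (sortf_le_iff y _ j).1 le_rfl
  refine lt_of_lt_of_le h1 ?_
  exact Fintype.card_subtype_mono _ _ (fun i hi => le_trans (hxy i) hi)




/-- the pattern set -/
def patt (t : ℝ) (S : Finset (Fin m)) : Set (Fin m → ℝ) := {x | ∀ i, i ∈ S ↔ x i ≤ t}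

lemma patt_eq_pi (t : ℝ) (S : Finset (Fin m)) [DecidablePred (· ∈ S)] :
    patt t S = Set.pi univ (fun i => if i ∈ S then Iic t else Ioi t) := by
  ext x
  simp only [patt, mem_setOf_eq, mem_pi, mem_univ, forall_true_left]
  refine forall_congr' (fun i => ?_)
  by_cases h : i ∈ S
  · simp only [h, if_true, mem_Iic, true_iff]
  · simp only [h, if_false, mem_Ioi, false_iff]
    exact ⟨fun h' => not_le.1 h', fun h' hc => absurd hc (not_le.2 h')⟩

lemma measurableSet_patt (t : ℝ) (S : Finset (Fin m)) : MeasurableSet (patt t S) := by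
  classical
  rw [patt_eq_pi]
  refine MeasurableSet.univ_pi (fun i => ?_)
  by_cases h : i ∈ S <;> simp [h, measurableSet_Iic, measurableSet_Ioi]

variable (μ : Measure ℝ) [IsProbabilityMeasure μ]

lemma nu_patt (t : ℝ) (S : Finset (Fin m)) :
    Measure.pi (fun _ : Fin m => μ) (patt t S)
      = μ (Iic t) ^ S.card * μ (Ioi t) ^ (m - S.card) := by
  classical
  rw [patt_eq_pi, Measure.pi_pi]
  have : ∀ i : Fin m, μ (if i ∈ S then Iic t else Ioi t)
      = if i ∈ S then μ (Iic t) else μ (Ioi t) := fun i => by by_cases h : i ∈ S <;> simp [h]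
  simp_rw [this]
  rw [Finset.prod_ite, Finset.prod_const, Finset.prod_const]
  congr 2
  · simp [Finset.filter_mem_eq_inter]
  · have : Finset.filter (fun x => x ∉ S) Finset.univ = Sᶜ := by
      ext i; simp
    rw [this, Finset.card_compl, Fintype.card_fin]




/-- one-dimensional core inequality -/
lemma oned (μ : Measure ℝ) (t : ℝ) (U : Set ℝ) (hU : IsUpperSet U) :
    μ (U ∩ Iic t) * μ (Ioi t) ≤ μ (U ∩ Ioi t) * μ (Iic t) := by
  by_cases h : (U ∩ Iic t).Nonempty
  · obtain ⟨u, huU, hut⟩ := h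
    have hsub : Ioi t ⊆ U := fun y hy => hU (le_of_lt (lt_of_le_of_lt hut hy)) huU
    have h1 : U ∩ Ioi t = Ioi t := inter_eq_self_of_subset_right hsub
    calc μ (U ∩ Iic t) * μ (Ioi t) ≤ μ (Iic t) * μ (Ioi t) := by
          gcongr; exact inter_subset_right
      _ = μ (U ∩ Ioi t) * μ (Iic t) := by rw [h1, mul_comm]
  · rw [not_nonempty_iff_eq_empty.1 h]
    simp

variable {n : ℕ} (μ : Measure ℝ) [IsProbabilityMeasure μ] (t₀ : ℝ)

/-- non-dependent insertNth -/
def ins (i₀ : Fin (n + 1)) (a : ℝ) (y : Fin n → ℝ) : Fin (n + 1) → ℝ :=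
  Fin.insertNth (α := fun _ => ℝ) i₀ a y

@[simp] lemma ins_apply_same (i₀ : Fin (n + 1)) (a : ℝ) (y : Fin n → ℝ) :
    ins i₀ a y i₀ = a := Fin.insertNth_apply_same (α := fun _ => ℝ) i₀ a y

@[simp] lemma ins_apply_succAbove (i₀ : Fin (n + 1)) (a : ℝ) (y : Fin n → ℝ) (j : Fin n) :
    ins i₀ a y (i₀.succAbove j) = y j := Fin.insertNth_apply_succAbove (α := fun _ => ℝ) i₀ a y j

/-- insertNth is monotone in the inserted value -/
lemma insertNth_mono (i₀ : Fin (n + 1)) (y : Fin n → ℝ) {a b : ℝ} (hab : a ≤ b) :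
    ins i₀ a y ≤ ins i₀ b y := by
  intro j
  by_cases hj : j = i₀
  · subst hj; rw [ins_apply_same, ins_apply_same]; exact hab
  · obtain ⟨l, rfl⟩ := Fin.exists_succAbove_eq hj
    rw [ins_apply_succAbove, ins_apply_succAbove]

/-- membership of insertNth in a pattern set -/
lemma insertNth_mem_patt (S : Finset (Fin (n + 1))) (i₀ : Fin (n + 1)) (hi₀ : i₀ ∉ S)
    (a : ℝ) (y : Fin n → ℝ) :
    (ins i₀ a y ∈ patt t₀ (insert i₀ S)
        ↔ (a ≤ t₀ ∧ ∀ j : Fin n, (i₀.succAbove j ∈ S ↔ y j ≤ t₀)))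
    ∧ (ins i₀ a y ∈ patt t₀ S
        ↔ (¬ (a ≤ t₀) ∧ ∀ j : Fin n, (i₀.succAbove j ∈ S ↔ y j ≤ t₀))) := by
  have hforall : ∀ (T : Finset (Fin (n+1))),
      ((∀ i, i ∈ T ↔ ins i₀ a y i ≤ t₀)
        ↔ ((i₀ ∈ T ↔ a ≤ t₀) ∧ ∀ j : Fin n, (i₀.succAbove j ∈ T ↔ y j ≤ t₀))) := by
    intro T
    rw [Fin.forall_iff_succAbove i₀]
    simp
  have hne : ∀ j : Fin n, i₀.succAbove j ≠ i₀ := fun j => Fin.succAbove_ne i₀ j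
  constructor
  · rw [show (ins i₀ a y ∈ patt t₀ (insert i₀ S)) ↔ _ from hforall (insert i₀ S)]
    have e1 : i₀ ∈ insert i₀ S := Finset.mem_insert_self i₀ S
    have e2 : ∀ j : Fin n, (i₀.succAbove j ∈ insert i₀ S ↔ i₀.succAbove j ∈ S) := by
      intro j
      simp [Finset.mem_insert, hne j]
    constructor
    · rintro ⟨h1, h2⟩
      exact ⟨h1.1 e1, fun j => by rw [← e2 j]; exact h2 j⟩
    · rintro ⟨h1, h2⟩
      exact ⟨⟨fun _ => h1, fun _ => e1⟩, fun j => by rw [e2 j]; exact h2 j⟩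
  · rw [show (ins i₀ a y ∈ patt t₀ S) ↔ _ from hforall S]
    constructor
    · rintro ⟨h1, h2⟩
      exact ⟨fun ha => hi₀ (h1.2 ha), h2⟩
    · rintro ⟨h1, h2⟩
      exact ⟨⟨fun hc => absurd hc hi₀, fun ha => absurd ha h1⟩, h2⟩



lemma step_ineq (B : Set (Fin (n+1) → ℝ)) (hB : MeasurableSet B) (hBup : IsUpperSet B)
    (S : Finset (Fin (n+1))) (i₀ : Fin (n+1)) (hi₀ : i₀ ∉ S) :
    Measure.pi (fun _ : Fin (n+1) => μ) (B ∩ patt t₀ (insert i₀ S)) * μ (Ioi t₀)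
      ≤ Measure.pi (fun _ : Fin (n+1) => μ) (B ∩ patt t₀ S) * μ (Iic t₀) := by
  classical
  set ν' := Measure.pi (fun _ : Fin n => μ) with hν'
  have mp := measurePreserving_piFinSuccAbove (fun _ : Fin (n+1) => μ) i₀
  set e := MeasurableEquiv.piFinSuccAbove (fun _ : Fin (n+1) => ℝ) i₀ with he
  have hsymm : ∀ (a : ℝ) (y : Fin n → ℝ), e.symm (a, y) = ins i₀ a y := fun a y => rfl
  have key : ∀ A : Set (Fin (n+1) → ℝ), MeasurableSet A →
      Measure.pi (fun _ : Fin (n+1) => μ) A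
        = ∫⁻ y, μ ((fun a => (a, y)) ⁻¹' (e.symm ⁻¹' A)) ∂ν' := by
    intro A hA
    have h1 : ⇑e ⁻¹' (⇑e.symm ⁻¹' A) = A := by
      ext x; simp
    calc Measure.pi (fun _ : Fin (n+1) => μ) A
        = Measure.pi (fun _ : Fin (n+1) => μ) (⇑e ⁻¹' (⇑e.symm ⁻¹' A)) := by rw [h1]
      _ = ((Measure.pi (fun _ : Fin (n+1) => μ)).map e) (⇑e.symm ⁻¹' A) :=
          (Measure.map_apply e.measurable (e.symm.measurable hA)).symm
      _ = (μ.prod ν') (⇑e.symm ⁻¹' A) := by rw [mp.map_eq]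
      _ = ∫⁻ y, μ ((fun a => (a, y)) ⁻¹' (e.symm ⁻¹' A)) ∂ν' :=
          Measure.prod_apply_symm (e.symm.measurable hA)
  have hmeas1 : MeasurableSet (B ∩ patt t₀ (insert i₀ S)) := hB.inter (measurableSet_patt _ _)
  have hmeas2 : MeasurableSet (B ∩ patt t₀ S) := hB.inter (measurableSet_patt _ _)
  rw [key _ hmeas1, key _ hmeas2,
    ← lintegral_mul_const _ (measurable_measure_prodMk_right (e.symm.measurable hmeas1)),
    ← lintegral_mul_const _ (measurable_measure_prodMk_right (e.symm.measurable hmeas2))]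
  refine lintegral_mono (fun y => ?_)
  have hins := insertNth_mem_patt t₀ S i₀ hi₀
  by_cases hR : ∀ j : Fin n, (i₀.succAbove j ∈ S ↔ y j ≤ t₀)
  · have h1 : (fun a => (a, y)) ⁻¹' (⇑e.symm ⁻¹' (B ∩ patt t₀ (insert i₀ S)))
        = {a : ℝ | ins i₀ a y ∈ B} ∩ Iic t₀ := by
      ext a
      simp only [mem_preimage, hsymm, mem_inter_iff, mem_setOf_eq, mem_Iic]
      exact ⟨fun h => ⟨h.1, ((hins a y).1.1 h.2).1⟩,
        fun h => ⟨h.1, (hins a y).1.2 ⟨h.2, hR⟩⟩⟩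
    have h2 : (fun a => (a, y)) ⁻¹' (⇑e.symm ⁻¹' (B ∩ patt t₀ S))
        = {a : ℝ | ins i₀ a y ∈ B} ∩ Ioi t₀ := by
      ext a
      simp only [mem_preimage, hsymm, mem_inter_iff, mem_setOf_eq, mem_Ioi]
      exact ⟨fun h => ⟨h.1, not_le.1 ((hins a y).2.1 h.2).1⟩,
        fun h => ⟨h.1, (hins a y).2.2 ⟨not_le.2 h.2, hR⟩⟩⟩
    rw [h1, h2]
    refine oned μ t₀ _ (fun a b hab ha => ?_)
    exact hBup (insertNth_mono i₀ y hab) ha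
  · have h1 : (fun a => (a, y)) ⁻¹' (⇑e.symm ⁻¹' (B ∩ patt t₀ (insert i₀ S))) = ∅ := by
      ext a
      simp only [mem_preimage, hsymm, mem_inter_iff, mem_empty_iff_false, iff_false]
      rintro ⟨-, hp⟩
      exact hR ((hins a y).1.1 hp).2
    rw [h1]
    simp

lemma pi_map_perm {m : ℕ} (μ : Measure ℝ) [IsProbabilityMeasure μ] (σ : Equiv.Perm (Fin m)) :
    Measure.map (fun x : Fin m → ℝ => x ∘ σ) (Measure.pi fun _ => μ) = Measure.pi fun _ => μ := by
  have hT : Measurable (fun x : Fin m → ℝ => x ∘ σ) :=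
    measurable_pi_iff.2 fun i => measurable_pi_apply (σ i)
  refine (Measure.pi_eq fun s hs => ?_).symm
  rw [Measure.map_apply hT (MeasurableSet.univ_pi hs)]
  have hpre : (fun x : Fin m → ℝ => x ∘ σ) ⁻¹' (univ.pi s)
      = univ.pi (fun j => s (σ.symm j)) := by
    ext x
    simp only [mem_preimage, mem_pi, mem_univ, forall_true_left, Function.comp]
    constructor
    · intro h j
      have := h (σ.symm j)
      rwa [σ.apply_symm_apply] at this
    · intro h i
      have := h (σ i)
      rwa [σ.symm_apply_apply] at this
  rw [hpre, Measure.pi_pi]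
  exact Equiv.prod_comp σ.symm (fun i => μ (s i))

lemma measure_inter_patt_card {m : ℕ} (μ : Measure ℝ) [IsProbabilityMeasure μ] (t₀ : ℝ)
    (B : Set (Fin m → ℝ)) (hB : MeasurableSet B)
    (hBsym : ∀ (σ : Equiv.Perm (Fin m)) (x : Fin m → ℝ), x ∘ σ ∈ B ↔ x ∈ B)
    (S T : Finset (Fin m)) (h : S.card = T.card) :
    Measure.pi (fun _ : Fin m => μ) (B ∩ patt t₀ S)
      = Measure.pi (fun _ : Fin m => μ) (B ∩ patt t₀ T) := by
  classical
  have hc : Fintype.card {x // x ∈ T} = Fintype.card {x // x ∈ S} := by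
    rw [Fintype.card_coe, Fintype.card_coe, h]
  set e0 : {x // x ∈ T} ≃ {x // x ∈ S} := Fintype.equivOfCardEq hc with he0
  set σ : Equiv.Perm (Fin m) := e0.extendSubtype with hσ
  have hmem : ∀ i, i ∈ T ↔ σ i ∈ S := by
    intro i
    constructor
    · intro hi; exact e0.extendSubtype_mem i hi
    · intro hc'
      by_contra hi
      exact e0.extendSubtype_not_mem i hi hc'
  have hT : Measurable (fun x : Fin m → ℝ => x ∘ σ) :=
    measurable_pi_iff.2 fun i => measurable_pi_apply (σ i)
  have hpre : (fun x : Fin m → ℝ => x ∘ σ) ⁻¹' (B ∩ patt t₀ T) = B ∩ patt t₀ S := by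
    ext x
    simp only [mem_preimage, mem_inter_iff, hBsym σ x]
    refine and_congr_right (fun _ => ?_)
    show (∀ i, i ∈ T ↔ x (σ i) ≤ t₀) ↔ (∀ j, j ∈ S ↔ x j ≤ t₀)
    constructor
    · intro hp j
      obtain ⟨i, rfl⟩ := σ.surjective j
      rw [← hmem i]
      exact hp i
    · intro hp i
      rw [hmem i]
      exact hp (σ i)
  calc Measure.pi (fun _ : Fin m => μ) (B ∩ patt t₀ S)
      = Measure.pi (fun _ : Fin m => μ)
          ((fun x : Fin m → ℝ => x ∘ σ) ⁻¹' (B ∩ patt t₀ T)) := by rw [hpre]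
    _ = (Measure.map (fun x : Fin m → ℝ => x ∘ σ) (Measure.pi fun _ => μ)) (B ∩ patt t₀ T) :=
        (Measure.map_apply hT (hB.inter (measurableSet_patt _ _))).symm
    _ = Measure.pi (fun _ : Fin m => μ) (B ∩ patt t₀ T) := by rw [pi_map_perm]

lemma chain_ineq (B : Set (Fin (n+1) → ℝ)) (hB : MeasurableSet B) (hBup : IsUpperSet B)
    (T S : Finset (Fin (n+1))) (hTS : T ⊆ S) :
    Measure.pi (fun _ : Fin (n+1) => μ) (B ∩ patt t₀ S) * μ (Ioi t₀) ^ (S.card - T.card)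
      ≤ Measure.pi (fun _ : Fin (n+1) => μ) (B ∩ patt t₀ T)
          * μ (Iic t₀) ^ (S.card - T.card) := by
  classical
  set d := S.card - T.card with hd
  clear_value d
  induction d generalizing S with
  | zero =>
    have hcard : S.card ≤ T.card := by omega
    have : T = S := Finset.eq_of_subset_of_card_le hTS hcard
    rw [this, pow_zero, pow_zero]
  | succ d ih =>
    have hne : (S \ T).Nonempty := by
      rw [Finset.sdiff_nonempty]
      intro hsub
      have := Finset.card_le_card hsub
      omega
    obtain ⟨i₀, hi₀⟩ := hne
    rw [Finset.mem_sdiff] at hi₀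
    set S0 := S.erase i₀ with hS0
    have hTc : T.card ≤ S.card := Finset.card_le_card hTS
    have hi₀S0 : i₀ ∉ S0 := Finset.notMem_erase _ _
    have hTS0 : T ⊆ S0 := fun j hj =>
      Finset.mem_erase.2 ⟨fun hc => hi₀.2 (hc ▸ hj), hTS hj⟩
    have hS0card : S0.card = S.card - 1 := Finset.card_erase_of_mem hi₀.1
    have hScard : 1 ≤ S.card := Finset.card_pos.2 ⟨i₀, hi₀.1⟩
    have hd0 : S0.card - T.card = d := by
      have := Finset.card_le_card hTS0
      omega
    have hins : S = insert i₀ S0 := (Finset.insert_erase hi₀.1).symm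
    have hstep := step_ineq μ t₀ B hB hBup S0 i₀ hi₀S0
    rw [← hins] at hstep
    have hih := ih S0 hTS0 hd0.symm
    calc Measure.pi (fun _ : Fin (n+1) => μ) (B ∩ patt t₀ S) * μ (Ioi t₀) ^ (d + 1)
        = (Measure.pi (fun _ : Fin (n+1) => μ) (B ∩ patt t₀ S) * μ (Ioi t₀))
            * μ (Ioi t₀) ^ d := by ring
      _ ≤ (Measure.pi (fun _ : Fin (n+1) => μ) (B ∩ patt t₀ S0) * μ (Iic t₀))
            * μ (Ioi t₀) ^ d := mul_le_mul_left hstep _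
      _ = (Measure.pi (fun _ : Fin (n+1) => μ) (B ∩ patt t₀ S0) * μ (Ioi t₀) ^ d)
            * μ (Iic t₀) := by ring
      _ ≤ (Measure.pi (fun _ : Fin (n+1) => μ) (B ∩ patt t₀ T) * μ (Iic t₀) ^ d)
            * μ (Iic t₀) := mul_le_mul_left hih _
      _ = Measure.pi (fun _ : Fin (n+1) => μ) (B ∩ patt t₀ T) * μ (Iic t₀) ^ (d + 1) := by
            ring

lemma pair_ineq (B : Set (Fin (n+1) → ℝ)) (hB : MeasurableSet B) (hBup : IsUpperSet B)
    (hBsym : ∀ (σ : Equiv.Perm (Fin (n+1))) (x : Fin (n+1) → ℝ), x ∘ σ ∈ B ↔ x ∈ B)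
    (S T : Finset (Fin (n+1))) (hcard : T.card ≤ S.card) :
    Measure.pi (fun _ : Fin (n+1) => μ) (B ∩ patt t₀ S)
        * Measure.pi (fun _ : Fin (n+1) => μ) (patt t₀ T)
      ≤ Measure.pi (fun _ : Fin (n+1) => μ) (B ∩ patt t₀ T)
        * Measure.pi (fun _ : Fin (n+1) => μ) (patt t₀ S) := by
  classical
  obtain ⟨T', hT'S, hT'card⟩ := Finset.exists_subset_card_eq hcard
  have haT : Measure.pi (fun _ : Fin (n+1) => μ) (B ∩ patt t₀ T')
      = Measure.pi (fun _ : Fin (n+1) => μ) (B ∩ patt t₀ T) :=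
    measure_inter_patt_card μ t₀ B hB hBsym T' T hT'card
  have hchain := chain_ineq μ t₀ B hB hBup T' S hT'S
  rw [haT, hT'card] at hchain
  rw [nu_patt μ t₀ T, nu_patt μ t₀ S]
  set p := μ (Iic t₀)
  set q := μ (Ioi t₀)
  set s := S.card
  set t := T.card
  set d := s - t with hdd
  have hsm : s ≤ n + 1 := by
    have := Finset.card_le_univ S
    simpa using this
  have e1 : n + 1 - t = d + (n + 1 - s) := by omega
  have e2 : s = d + t := by omega
  calc Measure.pi (fun _ : Fin (n+1) => μ) (B ∩ patt t₀ S) * (p ^ t * q ^ (n + 1 - t))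
      = (Measure.pi (fun _ : Fin (n+1) => μ) (B ∩ patt t₀ S) * q ^ d)
          * (p ^ t * q ^ (n + 1 - s)) := by rw [e1, pow_add]; ring
    _ ≤ (Measure.pi (fun _ : Fin (n+1) => μ) (B ∩ patt t₀ T) * p ^ d)
          * (p ^ t * q ^ (n + 1 - s)) := mul_le_mul_left hchain _
    _ = Measure.pi (fun _ : Fin (n+1) => μ) (B ∩ patt t₀ T) * (p ^ s * q ^ (n + 1 - s)) := by
          rw [e2, pow_add]; ring

lemma mem_patt_iff {m : ℕ} (t : ℝ) (S : Finset (Fin m)) (x : Fin m → ℝ)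
    [DecidablePred (fun i => x i ≤ t)] :
    x ∈ patt t S ↔ S = Finset.univ.filter (fun i => x i ≤ t) := by
  simp only [patt, mem_setOf_eq, Finset.ext_iff, Finset.mem_filter, Finset.mem_univ, true_and]

lemma scnt_eq_card_filter {m : ℕ} (t : ℝ) (x : Fin m → ℝ)
    [DecidablePred (fun i => x i ≤ t)] :
    scnt t x = (Finset.univ.filter (fun i => x i ≤ t)).card := by
  rw [scnt, Fintype.card_subtype]

lemma decomp {m : ℕ} (μ : Measure ℝ) [IsProbabilityMeasure μ] (t₀ : ℝ)
    (C : Set (Fin m → ℝ)) (hC : MeasurableSet C) (j : ℕ) :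
    Measure.pi (fun _ : Fin m => μ) (C ∩ {x | j ≤ scnt t₀ x})
      = ∑ S ∈ Finset.univ.filter (fun S : Finset (Fin m) => j ≤ S.card),
          Measure.pi (fun _ : Fin m => μ) (C ∩ patt t₀ S) := by
  classical
  have hunion : C ∩ {x | j ≤ scnt t₀ x}
      = ⋃ S ∈ Finset.univ.filter (fun S : Finset (Fin m) => j ≤ S.card),
          (C ∩ patt t₀ S) := by
    ext x
    simp only [mem_inter_iff, mem_setOf_eq, mem_iUnion, Finset.mem_filter, Finset.mem_univ,
      true_and, exists_prop]
    constructor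
    · rintro ⟨hxC, hj⟩
      refine ⟨Finset.univ.filter (fun i => x i ≤ t₀), ?_, hxC, ?_⟩
      · rwa [← scnt_eq_card_filter]
      · rw [mem_patt_iff]
    · rintro ⟨S, hS, hxC, hxp⟩
      refine ⟨hxC, ?_⟩
      rw [mem_patt_iff] at hxp
      rwa [scnt_eq_card_filter, ← hxp]
  rw [hunion]
  rw [measure_biUnion_finset ?_ (fun S _ => hC.inter (measurableSet_patt _ _))]
  intro S hS S' hS' hne
  refine Set.disjoint_left.2 (fun x hx hx' => ?_)
  apply hne
  have h1 := (mem_patt_iff t₀ S x).1 hx.2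
  have h2 := (mem_patt_iff t₀ S' x).1 hx'.2
  rw [h1, h2]

theorem main_pi (B : Set (Fin (n+1) → ℝ)) (hB : MeasurableSet B) (hBup : IsUpperSet B)
    (hBsym : ∀ (σ : Equiv.Perm (Fin (n+1))) (x : Fin (n+1) → ℝ), x ∘ σ ∈ B ↔ x ∈ B)
    (k : ℕ) (hk : 1 ≤ k) :
    Measure.pi (fun _ : Fin (n+1) => μ) (B ∩ {x | k ≤ scnt t₀ x})
        * Measure.pi (fun _ : Fin (n+1) => μ) {x | k - 1 ≤ scnt t₀ x}
      ≤ Measure.pi (fun _ : Fin (n+1) => μ) (B ∩ {x | k - 1 ≤ scnt t₀ x})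
        * Measure.pi (fun _ : Fin (n+1) => μ) {x | k ≤ scnt t₀ x} := by
  classical
  set ν := Measure.pi (fun _ : Fin (n+1) => μ) with hν
  have hdecompu : ∀ j : ℕ, ν {x | j ≤ scnt t₀ x}
      = ∑ S ∈ Finset.univ.filter (fun S : Finset (Fin (n+1)) => j ≤ S.card), ν (patt t₀ S) := by
    intro j
    have := decomp μ t₀ (univ : Set (Fin (n+1) → ℝ)) MeasurableSet.univ j
    simpa using this
  set 𝒮k := Finset.univ.filter (fun S : Finset (Fin (n+1)) => k ≤ S.card) with h𝒮k
  set ℰ := Finset.univ.filter (fun S : Finset (Fin (n+1)) => S.card = k - 1) with hℰ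
  have hsplit : Finset.univ.filter (fun S : Finset (Fin (n+1)) => k - 1 ≤ S.card)
      = 𝒮k ∪ ℰ := by
    ext S
    simp only [h𝒮k, hℰ, Finset.mem_union, Finset.mem_filter, Finset.mem_univ, true_and]
    omega
  have hdisj : Disjoint 𝒮k ℰ := by
    rw [Finset.disjoint_left]
    intro S hS hS'
    simp only [h𝒮k, hℰ, Finset.mem_filter, Finset.mem_univ, true_and] at hS hS'
    omega
  rw [decomp μ t₀ B hB k, decomp μ t₀ B hB (k-1), hdecompu k, hdecompu (k-1), hsplit,
    Finset.sum_union hdisj, Finset.sum_union hdisj]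
  set A := ∑ S ∈ 𝒮k, ν (B ∩ patt t₀ S)
  set Ae := ∑ S ∈ ℰ, ν (B ∩ patt t₀ S)
  set Bk := ∑ S ∈ 𝒮k, ν (patt t₀ S)
  set Be := ∑ S ∈ ℰ, ν (patt t₀ S)
  have hkey : A * Be ≤ Ae * Bk := by
    rw [Finset.sum_mul_sum, Finset.sum_mul_sum]
    rw [Finset.sum_comm]
    refine Finset.sum_le_sum (fun T hT => Finset.sum_le_sum (fun S hS => ?_))
    simp only [h𝒮k, hℰ, Finset.mem_filter, Finset.mem_univ, true_and] at hT hS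
    exact pair_ineq μ t₀ B hB hBup hBsym S T (by omega)
  calc A * (Bk + Be) = A * Bk + A * Be := by ring
    _ ≤ A * Bk + Ae * Bk := add_le_add_right hkey _
    _ = (A + Ae) * Bk := by ring

end OSPRD

/-- Positive regression dependence of order statistics: for i.i.d. variables with
continuous c.d.f., conditioning a nondecreasing event of the order statistics on
`X_{(k)} ≤ t₀` makes it less likely than conditioning on `X_{(k-1)} ≤ t₀`
(with `X_{(0)} := −∞`, so that conditioning on `X_{(0)} ≤ t₀` is trivial). -/
theorem order_statistics_positive_regression
    {Ω : Type*} [MeasurableSpace Ω] (P : Measure Ω) [IsProbabilityMeasure P]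
    (m : ℕ) (hm : 1 ≤ m)
    (X : Ω → Fin m → ℝ) (hX : Measurable X)
    (hindep : iIndepFun (fun i ω => X ω i) P)
    (F : ℝ → ℝ) (hFcont : Continuous F) (hFmono : Monotone F)
    (hcdf : ∀ i : Fin m, ∀ t : ℝ, P {ω | X ω i ≤ t} = ENNReal.ofReal (F t))
    -- `Y ω j`, `1 ≤ j ≤ m`, are the order statistics of `X ω`
    (Y : Ω → ℕ → ℝ) (hY : Measurable Y)
    (hperm : ∀ ω, ∃ σ : Equiv.Perm (Fin m), ∀ i : Fin m, Y ω ((i : ℕ) + 1) = X ω (σ i))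
    (hsorted : ∀ ω, ∀ j j' : ℕ, 1 ≤ j → j ≤ j' → j' ≤ m → Y ω j ≤ Y ω j')
    (t₀ : ℝ)
    (D' : Set (Fin m → ℝ)) (hD'meas : MeasurableSet D') (hD'up : IsUpperSet D')
    -- conditioning events: `E 0` is trivial (corresponding to `X_{(0)} = −∞`)
    (E : ℕ → Set Ω)
    (hE : ∀ j : ℕ, E j = if j = 0 then Set.univ else {ω | Y ω j ≤ t₀})
    -- assumed positive regression dependence property of the order statistics
    (hPRD1 : ∃ g : ℝ → ℝ, Monotone g ∧
      (fun ω => g (Y ω 1)) =ᵐ[P]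
        P[ (fun ω => D'.indicator (fun _ => (1:ℝ)) (fun i : Fin m => Y ω ((i : ℕ) + 1))) |
            MeasurableSpace.comap (fun ω => Y ω 1) inferInstance ])
    (hPRD2 : ∀ k : ℕ, 2 ≤ k → k ≤ m → ∃ g : ℝ × ℝ → ℝ, Monotone g ∧
      (fun ω => g (Y ω (k - 1), Y ω k)) =ᵐ[P]
        P[ (fun ω => D'.indicator (fun _ => (1:ℝ)) (fun i : Fin m => Y ω ((i : ℕ) + 1))) |
            MeasurableSpace.comap (fun ω => (Y ω (k - 1), Y ω k)) inferInstance ]) :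
    ∀ k : ℕ, 1 ≤ k → k ≤ m → 0 < P (E k) →
      P ({ω | (fun i : Fin m => Y ω ((i : ℕ) + 1)) ∈ D'} ∩ E k) / P (E k)
        ≤ P ({ω | (fun i : Fin m => Y ω ((i : ℕ) + 1)) ∈ D'} ∩ E (k - 1)) / P (E (k - 1)) := by
  intro k hk1 hkm hPEk
  obtain ⟨n, rfl⟩ : ∃ n, m = n + 1 := ⟨m - 1, by omega⟩
  classical
  set i0 : Fin (n + 1) := ⟨0, by omega⟩ with hi0
  have hXi : ∀ i : Fin (n + 1), Measurable (fun ω => X ω i) :=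
    fun i => (measurable_pi_apply i).comp hX
  set μ0 : Measure ℝ := P.map (fun ω => X ω i0) with hμ0
  haveI : IsProbabilityMeasure μ0 := Measure.isProbabilityMeasure_map (hXi i0).aemeasurable
  have hmarg : ∀ i : Fin (n + 1), P.map (fun ω => X ω i) = μ0 := by
    intro i
    haveI : IsProbabilityMeasure (P.map (fun ω => X ω i)) :=
      Measure.isProbabilityMeasure_map (hXi i).aemeasurable
    refine Measure.ext_of_Iic _ _ (fun a => ?_)
    rw [hμ0, Measure.map_apply (hXi i) measurableSet_Iic,
      Measure.map_apply (hXi i0) measurableSet_Iic]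
    have h1 : (fun ω => X ω i) ⁻¹' Iic a = {ω | X ω i ≤ a} := rfl
    have h2 : (fun ω => X ω i0) ⁻¹' Iic a = {ω | X ω i0 ≤ a} := rfl
    rw [h1, h2, hcdf i a, hcdf i0 a]
  have hmap : P.map X = Measure.pi (fun _ : Fin (n + 1) => μ0) := by
    refine (Measure.pi_eq fun s hs => ?_).symm
    rw [Measure.map_apply hX (MeasurableSet.univ_pi hs)]
    have hXpre : X ⁻¹' Set.pi univ s = ⋂ i ∈ (Finset.univ : Finset (Fin (n+1))),
        (fun ω => X ω i) ⁻¹' s i := by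
      ext ω
      simp [Set.mem_pi]
    rw [hXpre,
      (ProbabilityTheory.iIndepFun_iff_measure_inter_preimage_eq_mul.1 hindep)
        Finset.univ (fun i _ => hs i)]
    refine Finset.prod_congr rfl (fun i _ => ?_)
    rw [← hmarg i, Measure.map_apply (hXi i) (hs i)]
  -- identify the order statistics with the sorted sample
  have hYX : ∀ ω, (fun i : Fin (n + 1) => Y ω ((i : ℕ) + 1)) = OSPRD.sortf (X ω) := by
    intro ω
    obtain ⟨σ, hσ⟩ := hperm ω
    have hcomp : (fun i : Fin (n + 1) => Y ω ((i : ℕ) + 1)) = X ω ∘ σ := funext hσ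
    have hmono : Monotone (X ω ∘ σ) := by
      rw [← hcomp]
      intro i i' hii'
      exact hsorted ω ((i : ℕ) + 1) ((i' : ℕ) + 1) (by omega)
        (by exact_mod_cast Nat.succ_le_succ hii') (by omega)
    have := Tuple.unique_monotone hmono (Tuple.monotone_sort (X ω))
    rw [hcomp, this]
    rfl
  set B : Set (Fin (n + 1) → ℝ) := OSPRD.sortf ⁻¹' D' with hB
  have hBmeas : MeasurableSet B := OSPRD.measurable_sortf hD'meas
  have hBup : IsUpperSet B := fun x y hxy hx => hD'up (OSPRD.sortf_mono hxy) hx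
  have hBsym : ∀ (σ : Equiv.Perm (Fin (n + 1))) (x : Fin (n + 1) → ℝ), x ∘ σ ∈ B ↔ x ∈ B := by
    intro σ x
    simp only [hB, mem_preimage, OSPRD.sortf_comp_perm]
  have hDset : {ω | (fun i : Fin (n + 1) => Y ω ((i : ℕ) + 1)) ∈ D'} = X ⁻¹' B := by
    ext ω
    rw [mem_setOf_eq, hYX ω]
    rfl
  have hEeq : ∀ j : ℕ, j ≤ n + 1 → E j = X ⁻¹' {x | j ≤ OSPRD.scnt t₀ x} := by
    intro j hj
    rcases Nat.eq_zero_or_pos j with rfl | hjpos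
    · rw [hE 0, if_pos rfl]
      ext ω
      simp
    · rw [hE j, if_neg (by omega)]
      ext ω
      rw [mem_setOf_eq, mem_preimage, mem_setOf_eq]
      set jf : Fin (n + 1) := ⟨j - 1, by omega⟩ with hjf
      have hgj : Y ω j = (fun i : Fin (n + 1) => Y ω ((i : ℕ) + 1)) jf := by
        simp only [hjf]
        congr 1
        omega
      rw [hgj, hYX ω, OSPRD.sortf_le_iff]
      have : (jf : ℕ) = j - 1 := rfl
      rw [this]
      omega
  set ν0 := Measure.pi (fun _ : Fin (n + 1) => μ0) with hν0
  have hprob : ∀ j : ℕ, j ≤ n + 1 →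
      (P ({ω | (fun i : Fin (n + 1) => Y ω ((i : ℕ) + 1)) ∈ D'} ∩ E j)
          = ν0 (B ∩ {x | j ≤ OSPRD.scnt t₀ x}))
      ∧ P (E j) = ν0 {x | j ≤ OSPRD.scnt t₀ x} := by
    intro j hj
    have hnsm : MeasurableSet {x : Fin (n+1) → ℝ | j ≤ OSPRD.scnt t₀ x} :=
      OSPRD.measurable_scnt_set t₀ j
    constructor
    · rw [hDset, hEeq j hj, ← preimage_inter, ← Measure.map_apply hX (hBmeas.inter hnsm), hmap]
    · rw [hEeq j hj, ← Measure.map_apply hX hnsm, hmap]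
  have hk1n : k - 1 ≤ n + 1 := by omega
  have hmain := OSPRD.main_pi μ0 t₀ B hBmeas hBup hBsym k hk1
  rw [← (hprob k hkm).1, ← (hprob k hkm).2, ← (hprob (k-1) hk1n).1, ← (hprob (k-1) hk1n).2]
    at hmain
  -- finish: divide
  have hbk0 : P (E k) ≠ 0 := hPEk.ne'
  have hbktop : P (E k) ≠ ⊤ := measure_ne_top P _
  have hbk1top : P (E (k - 1)) ≠ ⊤ := measure_ne_top P _
  have hsub : E k ⊆ E (k - 1) := by
    rw [hEeq k hkm, hEeq (k-1) hk1n]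
    intro ω hω
    simp only [mem_preimage, mem_setOf_eq] at hω ⊢
    omega
  have hbk10 : P (E (k - 1)) ≠ 0 := by
    intro hc
    exact hbk0 (le_antisymm (hc ▸ measure_mono hsub) (zero_le))
  refine (ENNReal.div_le_iff hbk0 hbktop).2 ?_
  have heq : P ({ω | (fun i : Fin (n+1) => Y ω ((i : ℕ) + 1)) ∈ D'} ∩ E (k - 1)) / P (E (k - 1))
      * P (E k)
      = P ({ω | (fun i : Fin (n+1) => Y ω ((i : ℕ) + 1)) ∈ D'} ∩ E (k - 1)) * P (E k)
        / P (E (k - 1)) := by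
    rw [div_eq_mul_inv, div_eq_mul_inv]
    ring
  rw [heq]
  exact (ENNReal.le_div_iff_mul_le (Or.inl hbk10) (Or.inl hbk1top)).2 hmain
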